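/- There exists a universal constant R₀ > 0 with the following property: for every R ≥ R₀ and every continuous function L : [0,R] → ℝ such that (i) L(r) ≥ 2πr for all r ∈ [0,R], (ii) the function r ↦ L(r)/r is nondecreasing on (0,R], and (iii) ∫₀^R ((ln(R+1) − ln(r+1))/(r+1)²)·L(r) dr ≤ π·ln²(R+1), one has L(r) ≤ 2π·r·(1 + 10/ln R) for all r ∈ (0, √R], and consequently ∫₀^r L(s) ds ≤ π·r²·(1 + 10/ln R) for all r ∈ (0, √R]. -/

import Mathlib

open Real MeasureTheory intervalIntegral Set

noncomputable def Fa (A : ℝ) (x : ℝ) : ℝ :=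
  A * Real.log (x+1) - (Real.log (x+1))^2/2 + A * (x+1)⁻¹ - Real.log (x+1) * (x+1)⁻¹ - (x+1)⁻¹

lemma Fa_hasDeriv (A r : ℝ) (hr : (0:ℝ) ≤ r) :
    HasDerivAt (Fa A) ((A - Real.log (r+1)) / (r+1)^2 * r) r := by
  have hu : (0:ℝ) < r + 1 := by linarith
  have h1 : HasDerivAt (fun x : ℝ => x + 1) 1 r := (hasDerivAt_id r).add_const 1
  have hlog : HasDerivAt (fun x : ℝ => Real.log (x+1)) ((r+1)⁻¹) r := by
    simpa [Function.comp_def] using (Real.hasDerivAt_log hu.ne').comp r h1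
  have hinv : HasDerivAt (fun x : ℝ => (x+1)⁻¹) (-(((r+1)^2)⁻¹)) r := by
    simpa [Function.comp_def] using (hasDerivAt_inv hu.ne').comp r h1
  have h := ((((hlog.const_mul A).sub ((hlog.pow 2).div_const 2)).add
      (hinv.const_mul A)).sub (hlog.mul hinv)).sub hinv
  refine h.congr_deriv ?_
  field_simp
  ring

lemma contOn_w (A : ℝ) :
    ContinuousOn (fun r : ℝ => (A - Real.log (r+1)) / (r+1)^2) (Set.Ici 0) := by
  have hne : ∀ x ∈ Set.Ici (0:ℝ), x + 1 ≠ 0 := fun x hx => by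
    have : (0:ℝ) ≤ x := hx; positivity
  apply ContinuousOn.div
  · exact continuousOn_const.sub (ContinuousOn.log (by fun_prop) hne)
  · fun_prop
  · intro x hx
    have : (0:ℝ) ≤ x := hx
    positivity

lemma contOn_wr (A : ℝ) :
    ContinuousOn (fun r : ℝ => (A - Real.log (r+1)) / (r+1)^2 * r) (Set.Ici 0) :=
  (contOn_w A).mul continuousOn_id

lemma arith1 {p e c y0 y1 yS yR P : ℝ}
    (key : 2*p*(y1-y0) + c*(yR-y1) ≤ P)
    (e1 : 2*p*(1+e)*(yR-y1) ≤ c*(yR-y1))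
    (e2 : 2*p*e*(yR-yS) ≤ 2*p*e*(yR-y1)) :
    2*p*(yR-y0) + 2*p*(e*(yR-yS)) ≤ P := by nlinarith

lemma integral_wr (A : ℝ) {a b : ℝ} (ha : 0 ≤ a) (hab : a ≤ b) :
    ∫ r in a..b, (A - Real.log (r+1)) / (r+1)^2 * r = Fa A b - Fa A a := by
  apply intervalIntegral.integral_eq_sub_of_hasDerivAt
  · intro x hx
    rw [Set.uIcc_of_le hab] at hx
    exact Fa_hasDeriv A x (le_trans ha hx.1)
  · apply ContinuousOn.intervalIntegrable
    apply (contOn_wr A).mono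
    rw [Set.uIcc_of_le hab]
    exact fun x hx => le_trans ha hx.1

theorem stmt_12 :
    ∃ R₀ : ℝ, 0 < R₀ ∧
      ∀ R : ℝ, R₀ ≤ R →
        ∀ L : ℝ → ℝ, ContinuousOn L (Set.Icc 0 R) →
          (∀ r ∈ Set.Icc (0:ℝ) R, 2 * Real.pi * r ≤ L r) →
          (∀ x y : ℝ, 0 < x → x ≤ y → y ≤ R → L x / x ≤ L y / y) →
          (∫ r in (0:ℝ)..R,
              ((Real.log (R + 1) - Real.log (r + 1)) / (r + 1) ^ 2) * L r)
            ≤ Real.pi * (Real.log (R + 1)) ^ 2 →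
          (∀ r : ℝ, 0 < r → r ≤ Real.sqrt R →
              L r ≤ 2 * Real.pi * r * (1 + 10 / Real.log R)) ∧
          (∀ r : ℝ, 0 < r → r ≤ Real.sqrt R →
              (∫ s in (0:ℝ)..r, L s) ≤ Real.pi * r ^ 2 * (1 + 10 / Real.log R)) := by
  refine ⟨Real.exp 100, Real.exp_pos _, ?_⟩
  intro R hR L hLc hLlow hLmono hInt
  have hπ := Real.pi_pos
  set A := Real.log (R + 1) with hA
  set ε := 10 / Real.log R with hε
  have hR101 : (101:ℝ) ≤ R := le_trans (by linarith [Real.add_one_le_exp (100:ℝ)]) hR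
  have hR0 : (0:ℝ) < R := by linarith
  have hR1 : (1:ℝ) ≤ R := by linarith
  have hlogR : (100:ℝ) ≤ Real.log R := by
    rw [← Real.log_exp 100]
    exact Real.log_le_log (Real.exp_pos _) hR
  have hlogR0 : (0:ℝ) < Real.log R := by linarith
  have hAlogR : Real.log R ≤ A := Real.log_le_log hR0 (by linarith)
  have hA100 : (100:ℝ) ≤ A := le_trans hlogR hAlogR
  have hε0 : (0:ℝ) < ε := by rw [hε]; positivity
  have hε1 : ε ≤ 1 := by rw [hε, div_le_one hlogR0]; linarith
  have hsR0 : (0:ℝ) < Real.sqrt R := Real.sqrt_pos.mpr hR0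
  have hsR1 : (1:ℝ) ≤ Real.sqrt R := by
    simpa using Real.sqrt_le_sqrt hR1
  have hsRR : Real.sqrt R ≤ R := by nlinarith [Real.sq_sqrt hR0.le, hsR1]
  set B := Real.sqrt R + 1 with hBdef
  set l := Real.log B with hldef
  have hB0 : (0:ℝ) < B := by rw [hBdef]; linarith
  have hl0 : (0:ℝ) ≤ l := by
    rw [hldef]; exact Real.log_nonneg (by rw [hBdef]; linarith)
  have hlog2 : Real.log 2 ≤ 1 := by
    linarith [Real.log_le_sub_one_of_pos (show (0:ℝ) < 2 by norm_num)]
  have hlup : l ≤ 1 + A / 2 := by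
    have h1 : B ≤ 2 * Real.sqrt R := by rw [hBdef]; linarith
    have h2 : l ≤ Real.log (2 * Real.sqrt R) := by
      rw [hldef]; exact Real.log_le_log hB0 h1
    have h3 : Real.log (2 * Real.sqrt R) = Real.log 2 + Real.log (Real.sqrt R) :=
      Real.log_mul (by norm_num) (ne_of_gt hsR0)
    have h4 : Real.log (Real.sqrt R) = Real.log R / 2 := Real.log_sqrt hR0.le
    have h5 : Real.log R ≤ A := hAlogR
    linarith
  have hA2B : A ≤ 2 * B := by
    have h5 : A = 2 * Real.log (Real.sqrt (R+1)) := by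
      rw [hA, Real.log_sqrt (by linarith)]; ring
    have h6 : Real.log (Real.sqrt (R+1)) ≤ Real.sqrt (R+1) := by
      linarith [Real.log_le_sub_one_of_pos (show (0:ℝ) < Real.sqrt (R+1) by positivity)]
    have h7 : Real.sqrt (R+1) ≤ B := by
      have : Real.sqrt (R+1) ≤ Real.sqrt (B^2) := by
        apply Real.sqrt_le_sqrt
        rw [hBdef]
        nlinarith [Real.sq_sqrt hR0.le, hsR0.le]
      rwa [Real.sqrt_sq hB0.le] at this
    linarith
  have hRinv0 : (0:ℝ) ≤ (R+1)⁻¹ := by positivity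
  have hRinvle : (R+1)⁻¹ ≤ 1 := by
    rw [← one_div, div_le_one (by linarith)]; linarith
  -- nonnegativity of w and w*r on [0,R]
  have hw0 : ∀ x ∈ Set.Icc (0:ℝ) R, 0 ≤ (A - Real.log (x+1)) / (x+1)^2 := by
    intro x hx
    have hx1 : (0:ℝ) < x + 1 := by linarith [hx.1]
    have : Real.log (x+1) ≤ A := Real.log_le_log hx1 (by linarith [hx.2])
    have h2 : (0:ℝ) < (x+1)^2 := by positivity
    exact div_nonneg (by linarith) h2.le
  have hwx0 : ∀ x ∈ Set.Icc (0:ℝ) R, 0 ≤ (A - Real.log (x+1)) / (x+1)^2 * x :=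
    fun x hx => mul_nonneg (hw0 x hx) hx.1
  -- integrability helpers
  have hii : ∀ a b : ℝ, 0 ≤ a → a ≤ b → b ≤ R →
      IntervalIntegrable (fun r => (A - Real.log (r+1)) / (r+1)^2 * L r) volume a b := by
    intro a b ha hab hbR
    apply ContinuousOn.intervalIntegrable
    apply ContinuousOn.mul
    · apply (contOn_w A).mono
      rw [Set.uIcc_of_le hab]
      exact fun x hx => le_trans ha hx.1
    · apply hLc.mono
      rw [Set.uIcc_of_le hab]
      exact fun x hx => ⟨le_trans ha hx.1, le_trans hx.2 hbR⟩
  have hiwr : ∀ a b : ℝ, 0 ≤ a → a ≤ b →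
      IntervalIntegrable (fun r => (A - Real.log (r+1)) / (r+1)^2 * r) volume a b := by
    intro a b ha hab
    apply ContinuousOn.intervalIntegrable
    apply (contOn_wr A).mono
    rw [Set.uIcc_of_le hab]
    exact fun x hx => le_trans ha hx.1
  have hFa0 : Fa A 0 = A - 1 := by simp [Fa]
  have hFaR : Fa A R = A^2/2 - (R+1)⁻¹ := by
    simp only [Fa, ← hA]; ring
  have hFaS : Fa A (Real.sqrt R) = A * l - l^2/2 + A * B⁻¹ - l * B⁻¹ - B⁻¹ := by
    simp only [Fa, ← hBdef, ← hldef]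
  -- Part 1
  have part1 : ∀ r : ℝ, 0 < r → r ≤ Real.sqrt R → L r ≤ 2 * π * r * (1 + ε) := by
    intro r₀ hr₀ hr₀s
    by_contra hcon
    push_neg at hcon
    have hr₀R : r₀ ≤ R := hr₀s.trans hsRR
    set c := L r₀ / r₀ with hc_def
    have hc : 2 * π * (1 + ε) ≤ c := by
      rw [hc_def, le_div_iff₀ hr₀]; nlinarith only [hcon]
    have hsplit : (∫ r in (0:ℝ)..r₀, (A - Real.log (r+1)) / (r+1)^2 * L r)
        + ∫ r in r₀..R, (A - Real.log (r+1)) / (r+1)^2 * L r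
        = ∫ r in (0:ℝ)..R, (A - Real.log (r+1)) / (r+1)^2 * L r :=
      intervalIntegral.integral_add_adjacent_intervals
        (hii 0 r₀ le_rfl hr₀.le hr₀R) (hii r₀ R hr₀.le hr₀R le_rfl)
    have hm1 : 2 * π * (Fa A r₀ - Fa A 0)
        ≤ ∫ r in (0:ℝ)..r₀, (A - Real.log (r+1)) / (r+1)^2 * L r := by
      have h1 : ∫ r in (0:ℝ)..r₀, 2 * π * ((A - Real.log (r+1)) / (r+1)^2 * r)
          = 2 * π * (Fa A r₀ - Fa A 0) := by
        rw [intervalIntegral.integral_const_mul, integral_wr A le_rfl hr₀.le]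
      rw [← h1]
      apply intervalIntegral.integral_mono_on hr₀.le
        ((hiwr 0 r₀ le_rfl hr₀.le).const_mul (2*π)) (hii 0 r₀ le_rfl hr₀.le hr₀R)
      intro x hx
      have hxR : x ∈ Set.Icc (0:ℝ) R := ⟨hx.1, hx.2.trans hr₀R⟩
      have h2 := hLlow x hxR
      have h3 := hw0 x hxR
      calc 2 * π * ((A - Real.log (x+1)) / (x+1)^2 * x)
          = (A - Real.log (x+1)) / (x+1)^2 * (2 * π * x) := by ring
        _ ≤ (A - Real.log (x+1)) / (x+1)^2 * L x := mul_le_mul_of_nonneg_left h2 h3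
    have hm2 : c * (Fa A R - Fa A r₀)
        ≤ ∫ r in r₀..R, (A - Real.log (r+1)) / (r+1)^2 * L r := by
      have h1 : ∫ r in r₀..R, c * ((A - Real.log (r+1)) / (r+1)^2 * r)
          = c * (Fa A R - Fa A r₀) := by
        rw [intervalIntegral.integral_const_mul, integral_wr A hr₀.le hr₀R]
      rw [← h1]
      apply intervalIntegral.integral_mono_on hr₀R
        ((hiwr r₀ R hr₀.le hr₀R).const_mul c) (hii r₀ R hr₀.le hr₀R le_rfl)
      intro x hx
      have hx0 : (0:ℝ) < x := lt_of_lt_of_le hr₀ hx.1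
      have hxR : x ∈ Set.Icc (0:ℝ) R := ⟨hx0.le, hx.2⟩
      have hcx : c * x ≤ L x := (le_div_iff₀ hx0).mp (hLmono r₀ x hr₀ hx.1 hx.2)
      have h3 := hw0 x hxR
      calc c * ((A - Real.log (x+1)) / (x+1)^2 * x)
          = (A - Real.log (x+1)) / (x+1)^2 * (c * x) := by ring
        _ ≤ (A - Real.log (x+1)) / (x+1)^2 * L x := mul_le_mul_of_nonneg_left hcx h3
    have key : 2 * π * (Fa A r₀ - Fa A 0) + c * (Fa A R - Fa A r₀) ≤ π * A^2 := by
      calc 2 * π * (Fa A r₀ - Fa A 0) + c * (Fa A R - Fa A r₀)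
          ≤ (∫ r in (0:ℝ)..r₀, (A - Real.log (r+1)) / (r+1)^2 * L r)
            + ∫ r in r₀..R, (A - Real.log (r+1)) / (r+1)^2 * L r := add_le_add hm1 hm2
        _ = ∫ r in (0:ℝ)..R, (A - Real.log (r+1)) / (r+1)^2 * L r := hsplit
        _ ≤ π * A^2 := hInt
    have hI2 : 0 ≤ Fa A R - Fa A r₀ := by
      rw [← integral_wr A hr₀.le hr₀R]
      apply intervalIntegral.integral_nonneg hr₀R
      exact fun x hx => hwx0 x ⟨le_trans hr₀.le hx.1, hx.2⟩
    have hI3 : Fa A r₀ ≤ Fa A (Real.sqrt R) := by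
      have : 0 ≤ Fa A (Real.sqrt R) - Fa A r₀ := by
        rw [← integral_wr A hr₀.le hr₀s]
        apply intervalIntegral.integral_nonneg hr₀s
        exact fun x hx => hwx0 x ⟨le_trans hr₀.le hx.1, le_trans hx.2 hsRR⟩
      linarith only [this]
    have key2 : 2 * π * (Fa A R - Fa A 0) + 2 * π * (ε * (Fa A R - Fa A (Real.sqrt R)))
        ≤ π * A^2 := by
      have e1 : 2 * π * (1 + ε) * (Fa A R - Fa A r₀) ≤ c * (Fa A R - Fa A r₀) :=
        mul_le_mul_of_nonneg_right hc hI2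
      have e2 : 2 * π * ε * (Fa A R - Fa A (Real.sqrt R))
          ≤ 2 * π * ε * (Fa A R - Fa A r₀) :=
        mul_le_mul_of_nonneg_left (by linarith only [hI3]) (by positivity)
      exact arith1 key e1 e2
    -- bound on the tail T = Fa A R - Fa A √R
    have hdiv : (A - l - 1) * B⁻¹ ≤ 4 := by
      rw [← div_eq_mul_inv, div_le_iff₀ hB0]; linarith only [hA2B, hl0, hB0]
    have hT : A^2/8 - A ≤ Fa A R - Fa A (Real.sqrt R) := by
      rw [hFaR, hFaS]
      have h1 : (0:ℝ) ≤ A - l - (A/2 - 1) := by linarith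
      have h2 : (0:ℝ) ≤ (A - l) + (A/2 - 1) := by linarith
      nlinarith only [mul_nonneg h1 h2, hdiv, hRinvle, hRinv0, hA100, hlup, hl0]
    have hTpos : (0:ℝ) ≤ A^2/8 - A := by nlinarith only [hA100]
    have hεA : 10 / A ≤ ε := by
      rw [hε]
      exact div_le_div_of_nonneg_left (by norm_num) hlogR0 hAlogR
    have hεT : (10 / A) * (A^2/8 - A) ≤ ε * (Fa A R - Fa A (Real.sqrt R)) :=
      mul_le_mul hεA hT hTpos hε0.le
    have hfin : (10 / A) * (A^2/8 - A) = 10 * A / 8 - 10 := by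
      field_simp
    have hstep : ε * (Fa A R - Fa A (Real.sqrt R)) ≤ A - 1 + (R+1)⁻¹ := by
      rw [hFaR, hFa0] at key2
      have h2 : 2 * π * (ε * (A ^ 2 / 2 - (R + 1)⁻¹ - Fa A (Real.sqrt R)))
          ≤ 2 * π * (A - 1 + (R+1)⁻¹) := by
        nlinarith only [key2]
      have h3 := le_of_mul_le_mul_left h2 (by positivity : (0:ℝ) < 2 * π)
      rw [hFaR]
      linarith only [h3]
    rw [hfin] at hεT
    linarith only [hεT, hstep, hA100, hRinvle]
  constructor
  · exact part1
  · intro r hr hrs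
    have hrR : r ≤ R := hrs.trans hsRR
    have hLint : IntervalIntegrable L volume 0 r := by
      apply ContinuousOn.intervalIntegrable
      apply hLc.mono
      rw [Set.uIcc_of_le hr.le]
      exact fun x hx => ⟨hx.1, hx.2.trans hrR⟩
    have hgint : IntervalIntegrable (fun s : ℝ => 2 * π * (1 + ε) * s) volume 0 r :=
      (continuous_const.mul continuous_id).intervalIntegrable 0 r
    have hne0 : ∀ᵐ s : ℝ, s ≠ (0:ℝ) := by
      rw [ae_iff]
      simp only [ne_eq, not_not, setOf_eq_eq_singleton]
      exact Real.volume_singleton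
    have hae : L ≤ᵐ[volume.restrict (Set.Icc 0 r)] fun s => 2 * π * (1 + ε) * s := by
      filter_upwards [ae_restrict_mem measurableSet_Icc, ae_restrict_of_ae hne0]
        with s hs hs0
      have hs' : (0:ℝ) < s := lt_of_le_of_ne hs.1 (Ne.symm hs0)
      have := part1 s hs' (hs.2.trans hrs)
      nlinarith only [this]
    have hmono := intervalIntegral.integral_mono_ae_restrict hr.le hLint hgint hae
    have hval : (∫ s in (0:ℝ)..r, 2 * π * (1 + ε) * s) = π * r^2 * (1 + ε) := by
      rw [intervalIntegral.integral_const_mul, integral_id]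
      ring
    calc (∫ s in (0:ℝ)..r, L s) ≤ ∫ s in (0:ℝ)..r, 2 * π * (1 + ε) * s := hmono
      _ = π * r^2 * (1 + ε) := hval
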